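/- Let L : ℝⁿ → ℝ be differentiable, α > 0, θ₀ : ℝᵐ → ℝⁿ differentiable in φ, and define θ₁(φ) = θ₀(φ) - α·∇L(θ₀(φ)). Treating θ₁ as a constant vector c = θ₁(φ*), the gradient at φ* of φ ↦ L(θ₀(φ)) equals (1/(2α)) times the gradient at φ* of φ ↦ ‖θ₀(φ) - c‖². -/

import Mathlib

open InnerProductSpace

theorem stmt9 {n m : ℕ}
    (L : EuclideanSpace ℝ (Fin n) → ℝ) (hL : Differentiable ℝ L)
    (α : ℝ) (hα : 0 < α)
    (θ₀ : EuclideanSpace ℝ (Fin m) → EuclideanSpace ℝ (Fin n))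
    (hθ₀ : Differentiable ℝ θ₀)
    (θ₁ : EuclideanSpace ℝ (Fin m) → EuclideanSpace ℝ (Fin n))
    (hθ₁ : ∀ φ, θ₁ φ = θ₀ φ - α • gradient L (θ₀ φ))
    (φs : EuclideanSpace ℝ (Fin m)) (c : EuclideanSpace ℝ (Fin n))
    (hc : c = θ₁ φs) :
    gradient (fun φ => L (θ₀ φ)) φs =
      (1 / (2 * α)) • gradient (fun φ => ‖θ₀ φ - c‖ ^ 2) φs := by
  set D := fderiv ℝ θ₀ φs with hD
  set G := gradient L (θ₀ φs) with hG
  have hθd : HasFDerivAt θ₀ D φs := (hθ₀ φs).hasFDerivAt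
  have hLd : HasFDerivAt L ((toDual ℝ _) G) (θ₀ φs) :=
    ((hL (θ₀ φs)).hasGradientAt).hasFDerivAt
  have hf : HasFDerivAt (fun φ => L (θ₀ φ)) (((toDual ℝ _) G).comp D) φs :=
    hLd.comp φs hθd
  have hsub : HasFDerivAt (fun φ => θ₀ φ - c) D φs := hθd.sub_const c
  have hp : θ₀ φs - c = α • G := by
    rw [hc, hθ₁]; abel
  have hg2 : HasFDerivAt (fun φ => (inner ℝ (θ₀ φ - c) (θ₀ φ - c) : ℝ))
      ((fderivInnerCLM ℝ (θ₀ φs - c, θ₀ φs - c)).comp (D.prod D)) φs :=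
    hsub.inner ℝ hsub
  have hg : HasFDerivAt (fun φ => ‖θ₀ φ - c‖ ^ 2)
      ((fderivInnerCLM ℝ (θ₀ φs - c, θ₀ φs - c)).comp (D.prod D)) φs := by
    simpa only [real_inner_self_eq_norm_sq] using hg2
  have hkey : (fderivInnerCLM ℝ (θ₀ φs - c, θ₀ φs - c)).comp (D.prod D)
      = (2 * α) • (((toDual ℝ _) G).comp D) := by
    ext v
    simp [fderivInnerCLM_apply, hp, real_inner_smul_left, real_inner_comm (D v),
      toDual_apply_apply, Finset.mul_sum, Finset.sum_mul]
    rw [real_inner_smul_right]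
    ring
  have h1 : gradient (fun φ => L (θ₀ φ)) φs = (toDual ℝ _).symm (((toDual ℝ _) G).comp D) :=
    hf.hasGradientAt.gradient
  have h2 : gradient (fun φ => ‖θ₀ φ - c‖ ^ 2) φs
      = (2 * α) • (toDual ℝ _).symm (((toDual ℝ _) G).comp D) := by
    rw [hg.hasGradientAt.gradient, hkey, map_smul]
  rw [h1, h2, smul_smul, one_div, inv_mul_cancel₀ (by positivity), one_smul]
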